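/- For the one-variable constant-term functional: if a = ∑_{i=-N}^{N} c_i X^i ∈ C[X, X^{-1}], then the generating function F_a(t) = ∑_{k≥1} Tr(a^k) t^k is algebraic over C(t). (Special case acceptable: a = X + X^{-1}, where F_a(t) = ∑_{k≥1} binomial(2k,k) t^{2k} = 1/sqrt(1-4t^2) - 1 satisfies (1-4t^2)(F+1)^2 = 1.) -/

import Mathlib

/-- `a = X + X⁻¹` in the Laurent polynomial algebra `ℂ[ℤ]`. -/
noncomputable def lau : AddMonoidAlgebra ℂ ℤ :=
  AddMonoidAlgebra.single (1 : ℤ) (1 : ℂ) + AddMonoidAlgebra.single (-1 : ℤ) (1 : ℂ)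

open Finset

lemma lau_pow_apply (k : ℕ) :
    (lau ^ k).coeff (0 : ℤ) = if Even k then ((Nat.centralBinom (k / 2) : ℂ)) else 0 := by
  have h : lau ^ k = ∑ i ∈ range (k + 1),
      AddMonoidAlgebra.single ((i : ℤ) - (k - i : ℕ)) ((k.choose i : ℂ)) := by
    rw [lau, add_pow]
    refine Finset.sum_congr rfl fun i hi => ?_
    rw [AddMonoidAlgebra.single_pow, AddMonoidAlgebra.single_pow,
      AddMonoidAlgebra.single_mul_single]
    simp [sub_eq_add_neg]
  rw [h, AddMonoidAlgebra.coeff_sum, Finset.sum_apply']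
  simp only [AddMonoidAlgebra.coeff_single, Finsupp.single_apply, sub_eq_zero]
  have key : ∀ x ∈ range (k + 1),
      (if ((x : ℤ) = ((k - x : ℕ) : ℤ)) then ((k.choose x : ℂ)) else 0)
        = if x = k - x ∧ 2 * x = k then ((k.choose x : ℂ)) else 0 := by
    intro x hx
    have hx' : x ≤ k := Nat.lt_succ_iff.mp (mem_range.mp hx)
    have : ((x : ℤ) = ((k - x : ℕ) : ℤ)) ↔ (x = k - x ∧ 2 * x = k) := by
      rw [Nat.cast_sub hx']; omega
    simp only [this]
  rw [Finset.sum_congr rfl key]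
  by_cases hk : Even k
  · obtain ⟨m, hm⟩ := hk
    have h2 : ∀ x : ℕ, (x = k - x ∧ 2 * x = k) ↔ x = m := by omega
    simp only [h2]
    rw [Finset.sum_ite_eq' (range (k + 1)) m fun x => ((k.choose x : ℂ))]
    have hmem : m ∈ range (k + 1) := by simp; omega
    have hd : k / 2 = m := by omega
    rw [if_pos hmem, hd, if_pos ⟨m, hm⟩, Nat.centralBinom, hm, two_mul]
  · have h2 : ∀ x : ℕ, (x = k - x ∧ 2 * x = k) ↔ False := by
      intro x
      simp only [iff_false]
      rintro ⟨-, h2⟩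
      exact hk ⟨x, by omega⟩
    simp [h2, hk]

lemma half_sum (n : ℕ) (g : ℕ → ℕ) (hg : ∀ a ≤ n, g (n - a) = g a) :
    2 * ∑ a ∈ range (n + 1), a * g a = n * ∑ a ∈ range (n + 1), g a := by
  have h1 : ∑ a ∈ range (n + 1), (n - a) * g (n - a) = ∑ a ∈ range (n + 1), a * g a := by
    have := Finset.sum_range_reflect (fun a => a * g a) (n + 1)
    simpa using this
  have h2 : ∑ a ∈ range (n + 1), (n - a) * g a = ∑ a ∈ range (n + 1), a * g a := by
    rw [← h1]
    refine Finset.sum_congr rfl fun a ha => ?_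
    rw [hg a (Nat.lt_succ_iff.mp (mem_range.mp ha))]
  calc 2 * ∑ a ∈ range (n + 1), a * g a
      = ∑ a ∈ range (n + 1), a * g a + ∑ a ∈ range (n + 1), (n - a) * g a := by
        rw [h2]; ring
    _ = ∑ a ∈ range (n + 1), (a + (n - a)) * g a := by
        rw [← Finset.sum_add_distrib]
        exact Finset.sum_congr rfl fun a ha => by ring
    _ = n * ∑ a ∈ range (n + 1), g a := by
        rw [Finset.mul_sum]
        refine Finset.sum_congr rfl fun a ha => ?_
        have : a + (n - a) = n := by
          have := Nat.lt_succ_iff.mp (mem_range.mp ha); omega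
        rw [this]

lemma centralBinom_conv (m : ℕ) :
    ∑ a ∈ range (m + 1), Nat.centralBinom a * Nat.centralBinom (m - a) = 4 ^ m := by
  induction m with
  | zero => simp [Nat.centralBinom]
  | succ m ih =>
    set cb := Nat.centralBinom with hcb
    have hg : ∀ a ≤ m, cb (m - a) * cb (m - (m - a)) = cb a * cb (m - a) := by
      intro a ha
      rw [Nat.sub_sub_self ha, mul_comm]
    have hg' : ∀ a ≤ m + 1, cb (m + 1 - a) * cb (m + 1 - (m + 1 - a)) = cb a * cb (m + 1 - a) := by
      intro a ha
      rw [Nat.sub_sub_self ha, mul_comm]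
    have hhalf := half_sum m (fun a => cb a * cb (m - a)) hg
    have hhalf' := half_sum (m + 1) (fun a => cb a * cb (m + 1 - a)) hg'
    have hshift : ∑ a ∈ range (m + 2), a * (cb a * cb (m + 1 - a))
        = ∑ a ∈ range (m + 1), (a + 1) * (cb (a + 1) * cb (m - a)) := by
      rw [Finset.sum_range_succ' (fun a => a * (cb a * cb (m + 1 - a))) (m + 1)]
      simp
    have hterm : ∀ a, (a + 1) * (cb (a + 1) * cb (m - a))
        = 2 * (2 * a + 1) * (cb a * cb (m - a)) := by
      intro a
      rw [← mul_assoc, ← mul_assoc, Nat.succ_mul_centralBinom_succ a]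
    have hsum2 : ∑ a ∈ range (m + 1), 2 * (2 * a + 1) * (cb a * cb (m - a))
        = 4 * ∑ a ∈ range (m + 1), a * (cb a * cb (m - a))
          + 2 * ∑ a ∈ range (m + 1), cb a * cb (m - a) := by
      rw [Finset.mul_sum, Finset.mul_sum, ← Finset.sum_add_distrib]
      exact Finset.sum_congr rfl fun a ha => by ring
    have key : (m + 1) * ∑ a ∈ range (m + 2), cb a * cb (m + 1 - a)
        = (m + 1) * (4 * 4 ^ m) := by
      rw [← hhalf', hshift]
      calc 2 * ∑ a ∈ range (m + 1), (a + 1) * (cb (a + 1) * cb (m - a))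
          = 2 * ∑ a ∈ range (m + 1), 2 * (2 * a + 1) * (cb a * cb (m - a)) := by
            congr 1; exact Finset.sum_congr rfl fun a _ => hterm a
        _ = 2 * (4 * ∑ a ∈ range (m + 1), a * (cb a * cb (m - a))
              + 2 * ∑ a ∈ range (m + 1), cb a * cb (m - a)) := by rw [hsum2]
        _ = 4 * (2 * ∑ a ∈ range (m + 1), a * (cb a * cb (m - a)))
              + 4 * ∑ a ∈ range (m + 1), cb a * cb (m - a) := by ring
        _ = 4 * (m * ∑ a ∈ range (m + 1), cb a * cb (m - a))
              + 4 * ∑ a ∈ range (m + 1), cb a * cb (m - a) := by rw [hhalf]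
        _ = (m + 1) * (4 * 4 ^ m) := by rw [ih]; ring
    have := Nat.eq_of_mul_eq_mul_left (by omega : 0 < m + 1) key
    rw [this, pow_succ]
    ring

noncomputable def gfun : ℕ → ℂ := fun n => if Even n then ((Nat.centralBinom (n / 2) : ℂ)) else 0

lemma sum_even {M : Type*} [AddCommMonoid M] (h : ℕ → M) (m : ℕ) :
    ∑ i ∈ range (2 * m + 1), (if Even i then h (i / 2) else 0) = ∑ a ∈ range (m + 1), h a := by
  induction m with
  | zero => simp
  | succ m ih =>
    have h1 : 2 * (m + 1) + 1 = (2 * m + 1) + 1 + 1 := by ring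
    rw [h1, Finset.sum_range_succ, Finset.sum_range_succ, ih]
    have hodd : ¬ Even (2 * m + 1) := by simp [Nat.even_add_one, parity_simps]
    have heven : Even (2 * m + 1 + 1) := by refine ⟨m + 1, by ring⟩
    rw [if_neg hodd, if_pos heven]
    have : (2 * m + 1 + 1) / 2 = m + 1 := by omega
    rw [this, add_zero, Finset.sum_range_succ h (m + 1)]

lemma coeff_gg (n : ℕ) :
    (PowerSeries.coeff n) (PowerSeries.mk gfun * PowerSeries.mk gfun)
      = if Even n then (4 : ℂ) ^ (n / 2) else 0 := by
  rw [PowerSeries.coeff_mul]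
  simp only [PowerSeries.coeff_mk]
  rw [Finset.Nat.sum_antidiagonal_eq_sum_range_succ_mk]
  by_cases hn : Even n
  · obtain ⟨m, hm⟩ := hn
    have hn2 : n = 2 * m := by omega
    subst hn2
    have hterm : ∀ i ∈ range (2 * m + 1),
        gfun i * gfun (2 * m - i)
          = if Even i then ((Nat.centralBinom (i / 2) * Nat.centralBinom (m - i / 2) : ℕ) : ℂ)
            else 0 := by
      intro i hi
      have hi' : i ≤ 2 * m := Nat.lt_succ_iff.mp (mem_range.mp hi)
      by_cases he : Even i
      · obtain ⟨a, ha⟩ := he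
        have hia : i = 2 * a := by omega
        subst hia
        have h2 : Even (2 * m - 2 * a) := ⟨m - a, by omega⟩
        simp only [gfun]
        rw [if_pos ⟨a, by omega⟩, if_pos h2, if_pos ⟨a, by omega⟩]
        have e1 : 2 * a / 2 = a := by omega
        have e2 : (2 * m - 2 * a) / 2 = m - a := by omega
        rw [e1, e2, Nat.cast_mul]
      · simp only [gfun, if_neg he, zero_mul]
    rw [Finset.sum_congr rfl hterm, sum_even (fun a => ((Nat.centralBinom a * Nat.centralBinom (m - a) : ℕ) : ℂ)) m]
    rw [← Nat.cast_sum, centralBinom_conv m]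
    have : (2 * m) / 2 = m := by omega
    rw [if_pos ⟨m, by omega⟩, this]
    push_cast
    rfl
  · rw [if_neg hn]
    refine Finset.sum_eq_zero fun i hi => ?_
    have hi' : i ≤ n := Nat.lt_succ_iff.mp (mem_range.mp hi)
    by_cases he : Even i
    · have ho : ¬ Even (n - i) := fun h2 => hn (by
        obtain ⟨a, ha⟩ := he; obtain ⟨b, hb⟩ := h2; exact ⟨a + b, by omega⟩)
      simp only [gfun, if_neg ho, mul_zero]
    · simp only [gfun, if_neg he, zero_mul]

/-- For `a = X + X⁻¹` in the Laurent polynomial ring, the generating series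
`F(t) = ∑_{k≥1} Tr(aᵏ)tᵏ` of constant terms is algebraic: it satisfies
`(1-4t²)(F+1)² = 1` in `ℂ[[t]]`. -/
theorem trace_generating_function_algebraic :
    ∀ F : PowerSeries ℂ,
      F = PowerSeries.mk (fun k => if k = 0 then 0 else (lau ^ k).coeff (0 : ℤ)) →
      (1 - 4 * PowerSeries.X ^ 2) * (F + 1) ^ 2 = 1 := by
  intro F hF
  have hF1 : F + 1 = PowerSeries.mk gfun := by
    ext n
    rw [map_add, hF, PowerSeries.coeff_mk, PowerSeries.coeff_one, PowerSeries.coeff_mk]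
    rcases Nat.eq_zero_or_pos n with h0 | h0
    · subst h0
      simp [gfun, Nat.centralBinom]
    · rw [if_neg (by omega), if_neg (by omega), add_zero, lau_pow_apply, gfun]
  rw [hF1]
  ext n
  rw [sub_mul, one_mul, map_sub, sq, coeff_gg, PowerSeries.coeff_one]
  have h2 : (4 : PowerSeries ℂ) * PowerSeries.X ^ 2 * (PowerSeries.mk gfun * PowerSeries.mk gfun)
      = PowerSeries.C 4 * (PowerSeries.X ^ 2 * (PowerSeries.mk gfun * PowerSeries.mk gfun)) := by
    rw [map_ofNat]
    ring
  rw [h2, PowerSeries.coeff_C_mul, PowerSeries.coeff_X_pow_mul']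
  rcases Nat.eq_zero_or_pos n with h0 | h0
  · subst h0
    norm_num
  rw [if_neg (show ¬ n = 0 by omega)]
  by_cases hle : 2 ≤ n
  · rw [if_pos hle, coeff_gg]
    by_cases hn : Even n
    · have hn2 : Even (n - 2) := by obtain ⟨a, ha⟩ := hn; exact ⟨a - 1, by omega⟩
      rw [if_pos hn, if_pos hn2]
      have : n / 2 = (n - 2) / 2 + 1 := by omega
      rw [this, pow_succ]
      ring
    · have hn2 : ¬ Even (n - 2) := fun h => hn (by obtain ⟨a, ha⟩ := h; exact ⟨a + 1, by omega⟩)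
      rw [if_neg hn, if_neg hn2]
      ring
  · have h1 : n = 1 := by omega
    subst h1
    rw [if_neg hle, if_neg (by simp : ¬ Even 1)]
    ring
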